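/- If R0 > 1, then the point (i_h1, i_m1, r_m1), where i_h1 = (R0−1)·δμ·(p+qx)² / [(1−r)·acp·e^{−Λτ}·(abmp + μ(p+qx))], i_m1 = (R0−1)·(p+qx)²·μδ / [abmp·(1−r)·(δ(p+qx) + acp·e^{−Λτ} + δaγqx/(δ+θ))], and r_m1 = r·(1 − i_m1), satisfies the homogeneous-mixing equilibrium system (E1)–(E3). -/

import Mathlib

set_option maxHeartbeats 1000000 in
private lemma endemic_aux (s T A K β δ μ ih im rm r : ℝ)
    (hs : 0 < s) (hT : 0 < T) (hA : 0 < A) (hK : 0 < K) (hβ : 0 < β)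
    (hδ : 0 < δ) (hμ : 0 < μ)
    (hr : r = A / (s*T + A))
    (hih : ih = (β*K*s*T - δ*μ*s^2*(s*T+A)) / (s*T*K*(β+μ*s)))
    (him : im = (β*K*s*T - δ*μ*s^2*(s*T+A)) / (β*s*(δ*(s*T+A)+K*T)))
    (hrm : rm = r*(1-im)) :
    μ*ih = (β/s)*(1-ih)*im ∧ δ*im = (K/s)*(1-im-rm)*ih ∧ T*rm = (A/s)*(1-im-rm) := by
  have hD : 0 < s*T + A := by positivity
  have h2 : 0 < δ*(s*T+A)+K*T := by positivity
  have h3 : 0 < β+μ*s := by positivity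
  subst hrm him hih hr
  refine ⟨?_, ?_, ?_⟩ <;> (field_simp; ring)

/-- If R0 > 1 then the endemic point (i_h1, i_m1, r_m1)
satisfies the homogeneous-mixing equilibrium system (E1)–(E3). -/
theorem endemic_point_satisfies_homogeneous_equilibrium
    (a b c m δ μ θ γ τ x p q r Λ R0 ih1 im1 rm1 : ℝ)
    (ha : 0 < a) (hb : 0 < b) (hc : 0 < c) (hm : 0 < m)
    (hδ : 0 < δ) (hμ : 0 < μ) (hθ : 0 < θ) (hγ : 0 < γ)
    (hτ : 0 < τ) (hx : 0 < x) (hp0 : 0 < p) (hp1 : p < 1)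
    (hq : q = 1 - p)
    (hr : r = a * γ * q * x / ((p + q * x) * (δ + θ) + a * γ * q * x))
    (hΛ : Λ = δ + a * γ * q * x / (p + q * x))
    (hR0 : R0 = a ^ 2 * b * c * m * p ^ 2 * (1 - r) * Real.exp (-Λ * τ) /
      (δ * μ * (p + q * x) ^ 2))
    (hR0gt : 1 < R0)
    (hih1 : ih1 = (R0 - 1) * δ * μ * (p + q * x) ^ 2 /
      ((1 - r) * (a * c * p) * Real.exp (-Λ * τ) * (a * b * m * p + μ * (p + q * x))))
    (him1 : im1 = (R0 - 1) * (p + q * x) ^ 2 * μ * δ /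
      (a * b * m * p * (1 - r) *
        (δ * (p + q * x) + a * c * p * Real.exp (-Λ * τ) + δ * a * γ * q * x / (δ + θ))))
    (hrm1 : rm1 = r * (1 - im1)) :
    -- (E1)
    μ * ih1 = (a * b * m * p / (p + q * x)) * (1 - ih1) * im1 ∧
    -- (E2)
    δ * im1 = (a * c * p * Real.exp (-Λ * τ) / (p + q * x)) * (1 - im1 - rm1) * ih1 ∧
    -- (E3)
    (θ + δ) * rm1 = (a * γ * q * x / (p + q * x)) * (1 - im1 - rm1) := by
  have hq' : 0 < q := by rw [hq]; linarith
  have hE : 0 < Real.exp (-Λ*τ) := Real.exp_pos _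
  have hs : 0 < p + q*x := by positivity
  have hT : 0 < δ + θ := by positivity
  have hD : 0 < (p + q * x) * (δ + θ) + a * γ * q * x := by positivity
  have h1r : 1 - r = (p + q*x)*(δ+θ) / ((p + q * x) * (δ + θ) + a * γ * q * x) := by
    rw [hr]; field_simp; ring
  have h1rpos : 0 < 1 - r := by rw [h1r]; positivity
  have hih' : ih1 = ((a*b*m*p)*(a*c*p*Real.exp (-Λ*τ))*(p+q*x)*(δ+θ)
        - δ*μ*(p+q*x)^2*((p+q*x)*(δ+θ)+a*γ*q*x))
      / ((p+q*x)*(δ+θ)*(a*c*p*Real.exp (-Λ*τ))*((a*b*m*p)+μ*(p+q*x))) := by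
    rw [hih1, hR0, h1r]; field_simp
  have him' : im1 = ((a*b*m*p)*(a*c*p*Real.exp (-Λ*τ))*(p+q*x)*(δ+θ)
        - δ*μ*(p+q*x)^2*((p+q*x)*(δ+θ)+a*γ*q*x))
      / ((a*b*m*p)*(p+q*x)*(δ*((p+q*x)*(δ+θ)+a*γ*q*x)+(a*c*p*Real.exp (-Λ*τ))*(δ+θ))) := by
    rw [him1, hR0, h1r]; field_simp; ring
  have hr' : r = (a*γ*q*x) / ((p+q*x)*(δ+θ) + a*γ*q*x) := hr
  obtain ⟨e1, e2, e3⟩ := endemic_aux (p+q*x) (δ+θ) (a*γ*q*x) (a*c*p*Real.exp (-Λ*τ))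
    (a*b*m*p) δ μ ih1 im1 rm1 r hs hT (by positivity) (by positivity) (by positivity)
    hδ hμ hr' hih' him' hrm1
  refine ⟨e1, e2, ?_⟩
  have : (δ + θ) * rm1 = (θ + δ) * rm1 := by ring
  linarith [e3]
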